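/- Let A, Q be symmetric positive semidefinite N×N real matrices with tr(A) = tr(Q) = 1/2. If |Q e| ≤ |A e| for every unit vector e ∈ ℝ^N, then A = Q. -/

import Mathlib

open Matrix

theorem matrix_eq_of_norm_mulVec_le
    (N : ℕ) (A Q : Matrix (Fin N) (Fin N) ℝ)
    (hAsymm : A.IsSymm) (hQsymm : Q.IsSymm)
    (hApsd : A.PosSemidef) (hQpsd : Q.PosSemidef)
    (hAtr : A.trace = 1 / 2) (hQtr : Q.trace = 1 / 2)
    (h : ∀ e : EuclideanSpace ℝ (Fin N), ‖e‖ = 1 →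
      ‖(EuclideanSpace.equiv (Fin N) ℝ).symm (Q.mulVec e)‖ ≤
        ‖(EuclideanSpace.equiv (Fin N) ℝ).symm (A.mulVec e)‖) :
    A = Q := by
  classical
  have hnorm : ∀ v : Fin N → ℝ,
      ‖(EuclideanSpace.equiv (Fin N) ℝ).symm v‖ ^ 2 = v ⬝ᵥ v := by
    intro v
    rw [EuclideanSpace.norm_eq, Real.sq_sqrt (by positivity)]
    simp [dotProduct, sq]
  -- unit-vector inequality in dot-product form
  have h' : ∀ e : Fin N → ℝ, e ⬝ᵥ e = 1 →
      (Q *ᵥ e) ⬝ᵥ (Q *ᵥ e) ≤ (A *ᵥ e) ⬝ᵥ (A *ᵥ e) := by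
    intro e he
    have h1 : ‖((EuclideanSpace.equiv (Fin N) ℝ).symm e)‖ = 1 := by
      have h2 := hnorm e
      rw [he] at h2
      nlinarith [norm_nonneg ((EuclideanSpace.equiv (Fin N) ℝ).symm e)]
    have h3 := h ((EuclideanSpace.equiv (Fin N) ℝ).symm e) h1
    have h4 := pow_le_pow_left₀ (norm_nonneg _) h3 2
    rwa [hnorm, hnorm] at h4
  -- scaling to all vectors
  have hkey : ∀ x : Fin N → ℝ, (Q *ᵥ x) ⬝ᵥ (Q *ᵥ x) ≤ (A *ᵥ x) ⬝ᵥ (A *ᵥ x) := by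
    intro x
    rcases eq_or_ne x 0 with rfl | hx
    · simp
    · have hxx : 0 < x ⬝ᵥ x := by
        rcases lt_or_eq_of_le (show (0:ℝ) ≤ x ⬝ᵥ x from
          Finset.sum_nonneg fun i _ => mul_self_nonneg _) with h5 | h5
        · exact h5
        · exact absurd (dotProduct_self_eq_zero.mp h5.symm) hx
      set c : ℝ := Real.sqrt (x ⬝ᵥ x) with hc
      have hcpos : 0 < c := Real.sqrt_pos.mpr hxx
      have hc2 : c * c = x ⬝ᵥ x := Real.mul_self_sqrt hxx.le
      have he : (c⁻¹ • x) ⬝ᵥ (c⁻¹ • x) = 1 := by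
        rw [smul_dotProduct, dotProduct_smul, smul_eq_mul, smul_eq_mul]
        field_simp
        linarith [hc2]
      have h6 := h' (c⁻¹ • x) he
      rw [mulVec_smul, mulVec_smul, smul_dotProduct, dotProduct_smul,
        smul_dotProduct, dotProduct_smul, smul_eq_mul, smul_eq_mul,
        smul_eq_mul, smul_eq_mul] at h6
      have hinv : 0 < c⁻¹ * c⁻¹ := by positivity
      calc (Q *ᵥ x) ⬝ᵥ (Q *ᵥ x)
          = (c * c) * (c⁻¹ * (c⁻¹ * ((Q *ᵥ x) ⬝ᵥ (Q *ᵥ x)))) := by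
            field_simp
        _ ≤ (c * c) * (c⁻¹ * (c⁻¹ * ((A *ᵥ x) ⬝ᵥ (A *ᵥ x)))) := by
            apply mul_le_mul_of_nonneg_left h6 (by positivity)
        _ = (A *ᵥ x) ⬝ᵥ (A *ᵥ x) := by field_simp
  -- quadratic form of B*B
  have hdot : ∀ (B : Matrix (Fin N) (Fin N) ℝ), B.IsSymm → ∀ x : Fin N → ℝ,
      x ⬝ᵥ ((B * B) *ᵥ x) = (B *ᵥ x) ⬝ᵥ (B *ᵥ x) := by
    intro B hB x
    rw [← mulVec_mulVec, dotProduct_mulVec, ← mulVec_transpose, hB.eq]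
  -- A*A - Q*Q is PSD
  have hAA : (A * A).IsHermitian := by simpa [pow_two] using hApsd.1.pow 2
  have hQQ : (Q * Q).IsHermitian := by simpa [pow_two] using hQpsd.1.pow 2
  have hM : (A * A - Q * Q).PosSemidef := by
    refine .of_dotProduct_mulVec_nonneg (hAA.sub hQQ) fun x => ?_
    have h7 := hkey x
    simp only [star_trivial, sub_mulVec, dotProduct_sub, RCLike.re_to_real]
    rw [hdot A hAsymm x, hdot Q hQsymm x]
    linarith
  -- A - Q is PSD
  have hD : (A - Q).IsHermitian := hApsd.1.sub hQpsd.1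
  have hpos : (A - Q).PosSemidef := by
    apply hD.posSemidef_iff_eigenvalues_nonneg.mpr
    intro i
    by_contra hlt
    push_neg at hlt
    rw [Pi.zero_apply] at hlt
    set lam : ℝ := hD.eigenvalues i with hlam
    set v : Fin N → ℝ := ⇑(hD.eigenvectorBasis i) with hvdef
    have hv : (A - Q) *ᵥ v = lam • v := hD.mulVec_eigenvectorBasis i
    have hv1 : v ⬝ᵥ v = 1 := by
      have h8 : ((EuclideanSpace.equiv (Fin N) ℝ).symm v) = hD.eigenvectorBasis i := rfl
      have h9 := hnorm v
      rw [h8, hD.eigenvectorBasis.orthonormal.1 i] at h9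
      simpa using h9.symm
    have hv0 : v ≠ 0 := by
      intro h10
      rw [h10] at hv1; simp at hv1
    have hs : (0:ℝ) ≤ v ⬝ᵥ ((A * A - Q * Q) *ᵥ v) := by
      have := hM.dotProduct_mulVec_nonneg v
      simpa using this
    have hqA : (0:ℝ) ≤ v ⬝ᵥ (A *ᵥ v) := by simpa using hApsd.dotProduct_mulVec_nonneg v
    have hqQ : (0:ℝ) ≤ v ⬝ᵥ (Q *ᵥ v) := by simpa using hQpsd.dotProduct_mulVec_nonneg v
    have hfact : A * A - Q * Q = A * (A - Q) + (A - Q) * Q := by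
      noncomm_ring
    have hcomp : v ⬝ᵥ ((A * A - Q * Q) *ᵥ v)
        = lam * (v ⬝ᵥ (A *ᵥ v)) + lam * (v ⬝ᵥ (Q *ᵥ v)) := by
      rw [hfact, add_mulVec, dotProduct_add]
      congr 1
      · rw [← mulVec_mulVec, hv, mulVec_smul, dotProduct_smul, smul_eq_mul]
      · rw [← mulVec_mulVec, dotProduct_mulVec, ← mulVec_transpose,
          show (A - Q)ᵀ = A - Q from hD.eq, hv, smul_dotProduct, smul_eq_mul]
    rw [hcomp] at hs
    have hsum0 : v ⬝ᵥ (A *ᵥ v) = 0 ∧ v ⬝ᵥ (Q *ᵥ v) = 0 := by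
      constructor <;> nlinarith
    have hAv : A *ᵥ v = 0 := by
      have := (hApsd.dotProduct_mulVec_zero_iff v).mp (by simpa using hsum0.1)
      exact this
    have hQv : Q *ᵥ v = 0 := by
      have := (hQpsd.dotProduct_mulVec_zero_iff v).mp (by simpa using hsum0.2)
      exact this
    have : lam • v = 0 := by
      rw [← hv, sub_mulVec, hAv, hQv, sub_zero]
    rcases smul_eq_zero.mp this with h11 | h11
    · exact absurd h11 (ne_of_lt hlt)
    · exact hv0 h11
  -- trace of A - Q is zero, hence all eigenvalues vanish
  have htr : (A - Q).trace = 0 := by rw [trace_sub, hAtr, hQtr, sub_self]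
  have htr' : (A - Q).trace = ∑ i, hD.eigenvalues i := by
    simpa using hD.trace_eq_sum_eigenvalues
  have hev0 : ∀ i ∈ Finset.univ, hD.eigenvalues i = 0 :=
    (Finset.sum_eq_zero_iff_of_nonneg fun i _ => hpos.eigenvalues_nonneg i).mp
      (by rw [← htr', htr])
  have hD0 : A - Q = 0 := by
    have hdiag : Matrix.diagonal (RCLike.ofReal ∘ hD.eigenvalues : Fin N → ℝ) = 0 := by
      have : (RCLike.ofReal ∘ hD.eigenvalues : Fin N → ℝ) = 0 := by
        funext j; simpa using hev0 j (Finset.mem_univ j)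
      rw [this]; exact diagonal_zero
    rw [hD.spectral_theorem, hdiag, map_zero]
  exact sub_eq_zero.mp hD0
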